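/- Let f be entire with sup over z ∈ ℂ of |f'(z)|·exp(−ψ_m(z))/(1 + ψ_m'(|z|)) =: M < ∞. Then there is a constant C depending only on m such that |f(z) − f(0)| ≤ C·M·exp(ψ_m(z)) for all z ∈ ℂ; in particular f belongs to the growth Fock–Sobolev space F^∞_{ψ_m}. -/

import Mathlib

/-- The weight function ψ_m(z) = |z|²/2 − m·log(1+|z|). -/
noncomputable def psi (m : ℕ) (z : ℂ) : ℝ :=
  ‖z‖ ^ 2 / 2 - m * Real.log (1 + ‖z‖)

/-- ψ_m'(r) = r − m/(1+r). -/
noncomputable def psi' (m : ℕ) (r : ℝ) : ℝ := r - m / (1 + r)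

noncomputable def phiR (m : ℕ) (s : ℝ) : ℝ := s ^ 2 / 2 - m * Real.log (1 + s)

lemma psi_eq_phiR (m : ℕ) (z : ℂ) : psi m z = phiR m (‖z‖) := rfl

lemma hasDerivAt_phiR (m : ℕ) {s : ℝ} (hs : 0 ≤ s) :
    HasDerivAt (phiR m) (psi' m s) s := by
  have h1 : (0:ℝ) < 1 + s := by linarith
  have hlog : HasDerivAt (fun x : ℝ => Real.log (1 + x)) (1 / (1 + s)) s := by
    simpa using (((hasDerivAt_id s).const_add 1).log h1.ne')
  have h2 : HasDerivAt (fun x : ℝ => x ^ 2 / 2) s s := by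
    simpa using (hasDerivAt_pow 2 s).div_const 2
  have := h2.sub (hlog.const_mul (m : ℝ))
  have e : psi' m s = s - m * (1 / (1 + s)) := by unfold psi'; ring
  rw [e]; exact this

lemma phiR_le (m : ℕ) {s : ℝ} (hs : 0 ≤ s) : phiR m s ≤ s ^ 2 / 2 := by
  have : 0 ≤ (m : ℝ) * Real.log (1 + s) :=
    mul_nonneg (Nat.cast_nonneg m) (Real.log_nonneg (by linarith))
  simp only [phiR]; linarith

lemma log_one_add_le (s : ℝ) (hs : 0 ≤ s) : Real.log (1 + s) ≤ s := by
  have := Real.log_le_sub_one_of_pos (x := 1 + s) (by linarith)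
  linarith

lemma psi'_lower (m : ℕ) {s : ℝ} (hs : 0 ≤ s) : -(m:ℝ) ≤ psi' m s := by
  have h1 : (0:ℝ) < 1 + s := by linarith
  have : (m:ℝ) / (1 + s) ≤ m := by
    rw [div_le_iff₀ h1]
    nlinarith [Nat.cast_nonneg (α := ℝ) m]
  simp only [psi']; linarith

/-- denominator positivity for s ≥ √m -/
lemma denom_pos (m : ℕ) {s : ℝ} (hs : 0 ≤ s) (h : Real.sqrt m ≤ s) :
    0 < 1 + psi' m s := by
  have h1 : (0:ℝ) < 1 + s := by linarith
  have hm : (m:ℝ) ≤ s ^ 2 := by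
    calc (m:ℝ) = Real.sqrt m ^ 2 := (Real.sq_sqrt (Nat.cast_nonneg m)).symm
    _ ≤ s ^ 2 := by nlinarith [Real.sqrt_nonneg (m:ℝ)]
  have : (m:ℝ) / (1 + s) < 1 + s := by
    rw [div_lt_iff₀ h1]; nlinarith
  simp only [psi']; linarith

/-- the key comparison inequality -/
lemma key_ineq (m : ℕ) {s : ℝ} (hs : 0 ≤ s) :
    (1 + (m:ℝ)) * Real.exp ((m:ℝ)/2)
      + max (1 + psi' m s) 0 * Real.exp (phiR m s)
    ≤ 4 * ((m:ℝ) + 1) * Real.exp (((m:ℝ) + 1)/2)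
      + 2 * psi' m s * Real.exp (phiR m s) := by
  set a : ℝ := (m : ℝ) with ha
  have ha0 : 0 ≤ a := Nat.cast_nonneg m
  set p := psi' m s with hp
  set E := Real.exp (phiR m s) with hE
  have hE0 : 0 < E := Real.exp_pos _
  have hplow : -a ≤ p := psi'_lower m hs
  have h1s : (0:ℝ) < 1 + s := by linarith
  have hXY : Real.exp (a/2) ≤ Real.exp ((a+1)/2) := Real.exp_le_exp.mpr (by linarith)
  have hX0 : 0 < Real.exp (a/2) := Real.exp_pos _
  have hY0 : 0 < Real.exp ((a+1)/2) := Real.exp_pos _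
  rcases le_or_gt (1 + p) 0 with hc | hc
  · rw [max_eq_right hc]
    -- here (1+s)^2 ≤ a hence s^2 ≤ a, so E ≤ exp(a/2)
    have hs2 : s ^ 2 ≤ a := by
      have : (1 + s) * (1 + p) ≤ 0 := mul_nonpos_of_nonneg_of_nonpos h1s.le hc
      have hexp : (1 + s) * (1 + p) = (1 + s) * (1 + s) - a := by
        simp only [hp, psi']; field_simp; ring
      nlinarith
    have hEle : E ≤ Real.exp (a/2) := by
      rw [hE]
      refine Real.exp_le_exp.mpr ?_
      have := phiR_le m hs
      linarith
    have hpe : -2 * (a * E) ≤ 2 * p * E := by nlinarith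
    nlinarith
  · rw [max_eq_left hc.le]
    rcases le_or_gt p 1 with hc2 | hc2
    · -- s^2 ≤ a + 1 so E ≤ exp((a+1)/2)
      have hs2 : s ^ 2 ≤ a + 1 := by
        have : (1 + s) * p ≤ (1 + s) * 1 := by nlinarith
        have hexp : (1 + s) * p = (1 + s) * s - a := by
          simp only [hp, psi']; field_simp; ring
        nlinarith
      have hEle : E ≤ Real.exp ((a+1)/2) := by
        rw [hE]
        refine Real.exp_le_exp.mpr ?_
        have := phiR_le m hs
        linarith
      nlinarith
    · nlinarith

/-- r ≤ exp((m+1)²/2) · exp(φ_m(r)) for r ≥ 0. -/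
lemma r_le_exp (m : ℕ) {r : ℝ} (hr : 0 ≤ r) :
    r ≤ Real.exp (((m:ℝ) + 1) ^ 2 / 2) * Real.exp (phiR m r) := by
  set a : ℝ := (m : ℝ)
  have ha0 : 0 ≤ a := Nat.cast_nonneg m
  have h1 : r ≤ Real.exp r := by linarith [Real.add_one_le_exp r]
  have h2 : r - phiR m r ≤ (a + 1) ^ 2 / 2 := by
    have hlog := log_one_add_le r hr
    simp only [phiR]
    nlinarith [sq_nonneg (a + 1 - r), mul_le_mul_of_nonneg_left hlog ha0]
  calc r ≤ Real.exp r := h1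
  _ = Real.exp (r - phiR m r) * Real.exp (phiR m r) := by
      rw [← Real.exp_add]; ring_nf
  _ ≤ Real.exp ((a+1)^2/2) * Real.exp (phiR m r) :=
      mul_le_mul_of_nonneg_right (Real.exp_le_exp.mpr h2) (Real.exp_pos _).le

/-- If f is entire with M := sup_z |f'(z)|·e^{−ψ_m(z)}/(1+ψ_m'(|z|)) < ∞, then
|f(z) − f(0)| ≤ C·M·e^{ψ_m(z)} with C depending only on m; in particular f ∈ F^∞_{ψ_m}. -/
theorem stmt_2 (m : ℕ) :
    ∃ C > (0 : ℝ), ∀ f : ℂ → ℂ, Differentiable ℂ f → ∀ M : ℝ,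
      (∀ z : ℂ, ‖deriv f z‖ * Real.exp (-psi m z) /
          (1 + psi' m (‖z‖)) ≤ M) →
      (∀ z : ℂ, ‖f z - f 0‖ ≤ C * M * Real.exp (psi m z)) ∧
        BddAbove (Set.range fun z : ℂ => ‖f z‖ * Real.exp (-psi m z)) := by
  set a : ℝ := (m : ℝ) with ha
  have ha0 : 0 ≤ a := Nat.cast_nonneg m
  set L : ℝ := (1 + a) * Real.exp (a/2) with hL
  set K : ℝ := 4 * (a + 1) * Real.exp ((a + 1)/2) with hK
  have hK0 : 0 < K := by positivity
  have hL0 : 0 < L := by positivity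
  set C : ℝ := K * Real.exp ((a + 1) ^ 2 / 2) + 2 with hC
  refine ⟨C, by positivity, ?_⟩
  intro f hf M hMbd
  -- M is nonnegative
  have hM0 : 0 ≤ M := by
    have h := hMbd ((Real.sqrt a : ℝ) : ℂ)
    have habs : ‖((Real.sqrt a : ℝ) : ℂ)‖ = Real.sqrt a := by
      rw [Complex.norm_real, Real.norm_eq_abs, abs_of_nonneg (Real.sqrt_nonneg a)]
    rw [habs] at h
    have hden : 0 < 1 + psi' m (Real.sqrt a) := denom_pos m (Real.sqrt_nonneg a) le_rfl
    refine le_trans ?_ h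
    positivity
  -- pointwise bound away from the origin
  have hbd : ∀ w : ℂ, Real.sqrt a ≤ ‖w‖ →
      ‖deriv f w‖ ≤
        M * ((1 + psi' m (‖w‖)) * Real.exp (phiR m (‖w‖))) := by
    intro w hw
    have hden : 0 < 1 + psi' m (‖w‖) :=
      denom_pos m (norm_nonneg w) hw
    have h := hMbd w
    rw [div_le_iff₀ hden] at h
    have hE : (0:ℝ) < Real.exp (phiR m (‖w‖)) := Real.exp_pos _
    have := mul_le_mul_of_nonneg_right h hE.le
    rw [psi_eq_phiR] at this
    calc ‖deriv f w‖
        = ‖deriv f w‖ * Real.exp (-phiR m (‖w‖)) *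
            Real.exp (phiR m (‖w‖)) := by
          rw [mul_assoc, ← Real.exp_add]; simp
      _ ≤ M * (1 + psi' m (‖w‖)) * Real.exp (phiR m (‖w‖)) := this
      _ = M * ((1 + psi' m (‖w‖)) * Real.exp (phiR m (‖w‖))) := by ring
  -- deriv f is differentiable (hence continuous)
  have hfd : Differentiable ℂ (deriv f) := by
    intro w
    exact (((Complex.analyticOnNhd_univ_iff_differentiable.mpr hf).deriv) w trivial).differentiableAt
  -- the full pointwise bound with the cap D
  have hD : ∀ w : ℂ, ‖deriv f w‖ ≤
      M * (L + max (1 + psi' m (‖w‖)) 0 * Real.exp (phiR m (‖w‖))) := by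
    intro w
    rcases le_or_gt (Real.sqrt a) (‖w‖) with hw | hw
    · have hden : 0 < 1 + psi' m (‖w‖) :=
        denom_pos m (norm_nonneg w) hw
      have := hbd w hw
      rw [max_eq_left hden.le]
      nlinarith [mul_nonneg hM0 hL0.le]
    · -- maximum modulus on the ball of radius √a
      have hRpos : 0 < Real.sqrt a := lt_of_le_of_lt (norm_nonneg w) hw
      set R : ℝ := Real.sqrt a with hR
      have hmax : ‖deriv f w‖ ≤ M * L := by
        have hfront : ∀ ζ ∈ frontier (Metric.ball (0:ℂ) R), ‖deriv f ζ‖ ≤ M * L := by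
          intro ζ hζ
          rw [frontier_ball (0:ℂ) hRpos.ne'] at hζ
          have habs : ‖ζ‖ = R := by
            simpa [Complex.dist_eq] using hζ
          have := hbd ζ (by rw [habs])
          refine this.trans ?_
          have h1 : 1 + psi' m R ≤ 1 + a := by
            have hRa : R ≤ a := by
              have hm1 : 1 ≤ a := by
                have h0 : (0:ℝ) < a := Real.sqrt_pos.mp hRpos
                rw [ha] at h0 ⊢
                have h1 : 0 < m := by exact_mod_cast h0
                exact_mod_cast h1
              nlinarith [Real.sq_sqrt ha0, Real.sqrt_nonneg a, hm1]
            have : (m:ℝ) / (1 + R) ≥ 0 := by positivity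
            simp only [psi']; linarith
          have h2 : Real.exp (phiR m R) ≤ Real.exp (a/2) := by
            refine Real.exp_le_exp.mpr ((phiR_le m hRpos.le).trans ?_)
            rw [Real.sq_sqrt ha0]
          rw [habs]
          have hpos1 : 0 < 1 + psi' m R := denom_pos m hRpos.le le_rfl
          calc M * ((1 + psi' m R) * Real.exp (phiR m R))
              ≤ M * ((1 + a) * Real.exp (a/2)) := by
                refine mul_le_mul_of_nonneg_left ?_ hM0
                exact mul_le_mul h1 h2 (Real.exp_pos _).le (by linarith)
            _ = M * L := by rw [hL]
        have hmem : w ∈ closure (Metric.ball (0:ℂ) R) := by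
          refine subset_closure ?_
          simpa [Metric.mem_ball, Complex.dist_eq] using hw
        have := Complex.norm_le_of_forall_mem_frontier_norm_le
          Metric.isBounded_ball (hfd.diffContOnCl) hfront hmem
        simpa using this
      refine hmax.trans ?_
      have hnn : 0 ≤ max (1 + psi' m (‖w‖)) 0 *
          Real.exp (phiR m (‖w‖)) :=
        mul_nonneg (le_max_right _ _) (Real.exp_pos _).le
      nlinarith
  -- main estimate
  have hmain : ∀ z : ℂ, ‖f z - f 0‖ ≤ C * M * Real.exp (psi m z) := by
    intro z
    set r : ℝ := ‖z‖ with hr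
    have hr0 : 0 ≤ r := norm_nonneg z
    -- set up the comparison
    set g : ℝ → ℂ := fun t => f ((t : ℂ) * z) - f 0 with hg
    set B : ℝ → ℝ := fun t => M * (K * r * t + 2 * Real.exp (phiR m (t * r))) with hB
    set B' : ℝ → ℝ := fun t =>
      M * (K * r + 2 * (psi' m (t * r) * r) * Real.exp (phiR m (t * r))) with hB'
    have hg' : ∀ t : ℝ, HasDerivAt g (deriv f ((t:ℂ)*z) * z) t := by
      intro t
      have h0 : HasDerivAt (fun w : ℂ => w * z) z ((t:ℝ):ℂ) := hasDerivAt_mul_const z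
      have h1 : HasDerivAt (fun w : ℂ => f (w * z)) (deriv f ((t:ℂ)*z) * z) ((t:ℝ):ℂ) :=
        HasDerivAt.comp _ ((hf ((t:ℂ)*z)).hasDerivAt) h0
      exact (h1.comp_ofReal).sub_const (f 0)
    have hBder : ∀ t ∈ Set.Icc (0:ℝ) 1, HasDerivAt B (B' t) t := by
      intro t ht
      have htr : 0 ≤ t * r := mul_nonneg ht.1 hr0
      have h1 : HasDerivAt (fun t : ℝ => phiR m (t * r)) (psi' m (t * r) * r) t :=
        by have := (hasDerivAt_phiR m htr).comp t (hasDerivAt_mul_const r); exact this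
      have h2 := h1.exp
      have h3 : HasDerivAt (fun t : ℝ => K * r * t) (K * r) t := by
        simpa using (hasDerivAt_id t).const_mul (K * r)
      have := ((h3.add (h2.const_mul 2)).const_mul M)
      have e : B' t = M * (K * r + 2 * (Real.exp (phiR m (t * r)) * (psi' m (t * r) * r))) := by
        simp only [hB']; ring
      rw [e]; exact this
    have habs_t : ∀ t : ℝ, 0 ≤ t → ‖(t:ℂ) * z‖ = t * r := by
      intro t ht
      rw [norm_mul, Complex.norm_real, Real.norm_eq_abs, abs_of_nonneg ht, hr]
    have key : ∀ t ∈ Set.Ico (0:ℝ) 1, ‖deriv f ((t:ℂ)*z) * z‖ ≤ B' t := by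
      intro t ht
      rw [norm_mul]
      have hDt := hD ((t:ℂ) * z)
      rw [habs_t t ht.1] at hDt
      have hk := key_ineq m (mul_nonneg ht.1 hr0) (s := t * r)
      have hstep : ‖deriv f ((t:ℂ)*z)‖ * r ≤
          M * (L + max (1 + psi' m (t*r)) 0 * Real.exp (phiR m (t*r))) * r :=
        mul_le_mul_of_nonneg_right hDt hr0
      refine hstep.trans ?_
      simp only [hB']
      have hLK : L + max (1 + psi' m (t*r)) 0 * Real.exp (phiR m (t*r)) ≤
          K + 2 * psi' m (t*r) * Real.exp (phiR m (t*r)) := by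
        simpa [hL, hK] using hk
      have := mul_le_mul_of_nonneg_right hLK hr0
      nlinarith [hM0, this]
    have hcomp := image_norm_le_of_norm_deriv_right_le_deriv_boundary'
      (f := g) (f' := fun t => deriv f ((t:ℂ)*z) * z) (a := 0) (b := 1)
      (Continuous.continuousOn (by
        have : Continuous g := by
          apply Continuous.sub _ continuous_const
          exact hf.continuous.comp (by continuity)
        exact this))
      (fun t ht => (hg' t).hasDerivWithinAt)
      (B := B) (B' := B')
      (by
        have h0 : ‖g 0‖ = 0 := by simp [hg]
        rw [h0]
        show (0:ℝ) ≤ M * (K * r * 0 + 2 * Real.exp (phiR m (0 * r)))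
        have h2 : (0:ℝ) ≤ K * r * 0 + 2 * Real.exp (phiR m (0 * r)) := by positivity
        exact mul_nonneg hM0 h2)
      (fun t ht => (hBder t ht).continuousAt.continuousWithinAt)
      (fun t ht => (hBder t (Set.Ico_subset_Icc_self ht)).hasDerivWithinAt)
      key
    have h1 := hcomp (Set.right_mem_Icc.mpr zero_le_one)
    have hg1 : ‖g 1‖ = ‖f z - f 0‖ := by
      simp [hg]
    rw [hg1] at h1
    simp only [hB, one_mul, mul_one] at h1
    refine h1.trans ?_
    rw [psi_eq_phiR, ← hr]
    have hrle := r_le_exp m hr0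
    have : K * r ≤ K * Real.exp ((a+1)^2/2) * Real.exp (phiR m r) := by
      calc K * r ≤ K * (Real.exp ((a+1)^2/2) * Real.exp (phiR m r)) :=
            mul_le_mul_of_nonneg_left hrle hK0.le
        _ = K * Real.exp ((a+1)^2/2) * Real.exp (phiR m r) := by ring
    have hE0 : (0:ℝ) < Real.exp (phiR m r) := Real.exp_pos _
    calc M * (K * r + 2 * Real.exp (phiR m r))
        ≤ M * (K * Real.exp ((a+1)^2/2) * Real.exp (phiR m r)
            + 2 * Real.exp (phiR m r)) := by
          refine mul_le_mul_of_nonneg_left ?_ hM0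
          linarith
      _ = C * M * Real.exp (phiR m r) := by rw [hC]; ring
  refine ⟨hmain, ?_⟩
  -- boundedness
  refine ⟨C * M + ‖f 0‖ * Real.exp (a^2/2), ?_⟩
  rintro x ⟨z, rfl⟩
  have hr0 : 0 ≤ ‖z‖ := norm_nonneg z
  have hexp1 : Real.exp (-psi m z) ≤ Real.exp (a^2/2) := by
    refine Real.exp_le_exp.mpr ?_
    rw [psi_eq_phiR]
    set s := ‖z‖
    have hlog := log_one_add_le s hr0
    simp only [phiR]
    nlinarith [sq_nonneg (a - s), mul_le_mul_of_nonneg_left hlog ha0]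
  have h1 : ‖f z‖ ≤ ‖f z - f 0‖ + ‖f 0‖ := by
    calc ‖f z‖ = ‖(f z - f 0) + f 0‖ :=
          congrArg (‖·‖) (by ring)
      _ ≤ _ := norm_add_le _ _
  have h2 := hmain z
  have hE0 : (0:ℝ) < Real.exp (-psi m z) := Real.exp_pos _
  have hEE : Real.exp (psi m z) * Real.exp (-psi m z) = 1 := by
    rw [← Real.exp_add]; simp
  calc ‖f z‖ * Real.exp (-psi m z)
      ≤ (C * M * Real.exp (psi m z) + ‖f 0‖) * Real.exp (-psi m z) := by
        refine mul_le_mul_of_nonneg_right ?_ hE0.le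
        linarith
    _ = C * M * (Real.exp (psi m z) * Real.exp (-psi m z))
        + ‖f 0‖ * Real.exp (-psi m z) := by ring
    _ ≤ C * M + ‖f 0‖ * Real.exp (a^2/2) := by
        rw [hEE, mul_one]
        have : ‖f 0‖ * Real.exp (-psi m z) ≤
            ‖f 0‖ * Real.exp (a^2/2) :=
          mul_le_mul_of_nonneg_left hexp1 (norm_nonneg _)
        linarith
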